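/- Assume b̃ > 0. Then the function α is strictly increasing on [0,T); consequently α(t) ∈ [α(0), 0) for all t ∈ [0,T). -/

import Mathlib

open Real

/-- The separating curve `α(t)`. -/
noncomputable def alphaCurve (a δ b T t : ℝ) : ℝ :=
  (b - δ^2/(2*a^2)) * (1 - a*(T - t)/(1 - Real.exp (-(a*(T - t)))))
    - δ^2/(4*a^2) * (1 - Real.exp (-(a*(T - t))))

lemma den_pos {u : ℝ} (hu : 0 < u) : 0 < 1 - Real.exp (-u) := by
  have : Real.exp (-u) < 1 := Real.exp_lt_one_iff.mpr (by linarith)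
  linarith

lemma psi_strictMono : StrictMonoOn (fun u : ℝ => u / (1 - Real.exp (-u))) (Set.Ioi 0) := by
  apply strictMonoOn_of_deriv_pos (convex_Ioi 0)
  · apply ContinuousOn.div continuousOn_id
    · exact (continuous_const.sub (Real.continuous_exp.comp continuous_neg)).continuousOn
    · intro x hx
      exact ne_of_gt (den_pos hx)
  · intro x hx
    rw [interior_Ioi] at hx
    have hx0 : (0:ℝ) < x := hx
    have hden := den_pos hx0
    have h1 : HasDerivAt (fun u : ℝ => Real.exp (-u)) (-Real.exp (-x)) x := by
      simpa [Function.comp_def] using (Real.hasDerivAt_exp (-x)).comp x (hasDerivAt_neg x)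
    have h2 : HasDerivAt (fun u : ℝ => 1 - Real.exp (-u)) (Real.exp (-x)) x := by
      simpa [Pi.sub_def] using (hasDerivAt_const x (1:ℝ)).sub h1
    have h3 : HasDerivAt (fun u : ℝ => u / (1 - Real.exp (-u)))
        ((1 * (1 - Real.exp (-x)) - x * Real.exp (-x)) / (1 - Real.exp (-x))^2) x :=
      (hasDerivAt_id x).div h2 (ne_of_gt hden)
    rw [h3.deriv]
    have hlt : x + 1 < Real.exp x := Real.add_one_lt_exp (ne_of_gt hx0)
    have hexp : Real.exp (-x) * Real.exp x = 1 := by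
      rw [← Real.exp_add]; simp
    have hexppos : 0 < Real.exp (-x) := Real.exp_pos _
    have hnum : 0 < 1 * (1 - Real.exp (-x)) - x * Real.exp (-x) := by nlinarith
    exact div_pos hnum (by positivity)

/-- if `b̃ = b − δ²/(2a²) > 0`, then `α` is strictly increasing on
`[0,T)`; consequently `α(t) ∈ [α(0), 0)` for every `t ∈ [0,T)`. -/
theorem alpha_strictMono (a δ b T : ℝ) (ha : 0 < a) (hδ : 0 < δ) (hT : 0 < T)
    (hb : 0 < b - δ^2/(2*a^2)) :
    (∀ t₁ t₂ : ℝ, 0 ≤ t₁ → t₁ < t₂ → t₂ < T →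
      alphaCurve a δ b T t₁ < alphaCurve a δ b T t₂) ∧
    (∀ t : ℝ, 0 ≤ t → t < T →
      alphaCurve a δ b T 0 ≤ alphaCurve a δ b T t ∧ alphaCurve a δ b T t < 0) := by
  have hc : 0 < δ^2/(4*a^2) := by positivity
  have key : ∀ t₁ t₂ : ℝ, 0 ≤ t₁ → t₁ < t₂ → t₂ < T →
      alphaCurve a δ b T t₁ < alphaCurve a δ b T t₂ := by
    intro t₁ t₂ ht₁ h12 h2T
    set u₁ := a * (T - t₁) with hu₁
    set u₂ := a * (T - t₂) with hu₂
    have hu₂0 : 0 < u₂ := by have : 0 < T - t₂ := by linarith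
                             positivity
    have hu₁0 : 0 < u₁ := by have : 0 < T - t₁ := by linarith
                             positivity
    have hlt : u₂ < u₁ := by
      apply mul_lt_mul_of_pos_left _ ha
      linarith
    have hpsi : u₂ / (1 - Real.exp (-u₂)) < u₁ / (1 - Real.exp (-u₁)) :=
      psi_strictMono (Set.mem_Ioi.mpr hu₂0) (Set.mem_Ioi.mpr hu₁0) hlt
    have hmon : Real.exp (-u₁) < Real.exp (-u₂) := Real.exp_lt_exp.mpr (by linarith)
    unfold alphaCurve
    rw [← hu₁, ← hu₂]
    nlinarith [hpsi, hmon]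
  refine ⟨key, ?_⟩
  intro t ht htT
  constructor
  · rcases eq_or_lt_of_le ht with h | h
    · rw [← h]
    · exact le_of_lt (key 0 t le_rfl h htT)
  · set u := a * (T - t) with hu
    have hu0 : 0 < u := by have : 0 < T - t := by linarith
                           positivity
    have hden := den_pos hu0
    have hpsi : 1 < u / (1 - Real.exp (-u)) := by
      rw [one_lt_div hden]
      have := Real.add_one_lt_exp (show -u ≠ 0 by linarith)
      linarith
    unfold alphaCurve
    rw [← hu]
    nlinarith [hpsi, hden]
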